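/- Let q be a prime power, γ a primitive element of F_{q^2}, χ' the canonical additive character of F_{q^2}, and χ that of F_q. Let N: F_{q^2} → F_q be the norm map. Then for any c ∈ F_{q^2}^* and integer j, Σ_{w ∈ F_{q^2}^*} χ'(c γ^{j} w^{q-1}) = -Σ_{ψ} G_{F_q}(ψ̄, χ)^2 ψ(N(c γ^{j})), where the sum is over all multiplicative characters ψ of F_q and G_{F_q}(ψ̄, χ) is the Gauss sum over F_q. -/

import Mathlib

/-- The canonical additive character of a finite field of characteristic `p`. -/
noncomputable def canAddChar (p : ℕ) (F : Type) [Field F] [Fintype F]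
    [Algebra (ZMod p) F] (x : F) : ℂ :=
  Complex.exp (2 * Real.pi * Complex.I * ((Algebra.trace (ZMod p) F x).val : ℂ) / p)

open Finset

section AuxChar

variable (p : ℕ) [Fact p.Prime] [NeZero p] (F : Type) [Field F] [Fintype F]
  [Algebra (ZMod p) F]

/-- The canonical additive character, as an `AddChar`. -/
noncomputable def stdChar : AddChar F ℂ :=
  (ZMod.stdAddChar (N := p)).compAddMonoidHom (Algebra.trace (ZMod p) F).toAddMonoidHom

lemma stdChar_apply (x : F) : stdChar p F x = canAddChar p F x := by
  simp only [stdChar, AddChar.compAddMonoidHom_apply, LinearMap.toAddMonoidHom_coe,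
    ZMod.stdAddChar_apply, ZMod.toCircle_apply, canAddChar]

lemma stdChar_ne_one : stdChar p F ≠ 1 := by
  obtain ⟨x, hx⟩ := Algebra.trace_surjective (ZMod p) F (1 : ZMod p)
  intro h
  have h2 : ZMod.stdAddChar (1 : ZMod p) = 1 := by
    have := congrArg (fun ψ : AddChar F ℂ => ψ x) h
    simpa [stdChar, hx] using this
  have h3 : (1 : ZMod p) = 0 := by
    apply ZMod.injective_stdAddChar
    rw [h2, AddChar.map_zero_eq_one]
  exact one_ne_zero h3

lemma sum_stdChar_eq_zero : ∑ x : F, stdChar p F x = 0 :=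
  AddChar.sum_eq_zero_of_ne_one (stdChar_ne_one p F)

end AuxChar

section Count

variable {F E : Type} [Field F] [Fintype F] [DecidableEq F] [Field E] [Fintype E]
  [DecidableEq E] [Algebra F E]

lemma roots_card_le_two (t n : E) :
    (univ.filter fun w : E => w ^ 2 - t * w + n = 0).card ≤ 2 := by
  by_cases h : ∃ u, u ^ 2 - t * u + n = 0
  · obtain ⟨u, hu⟩ := h
    calc (univ.filter fun w : E => w ^ 2 - t * w + n = 0).card
        ≤ ({u, t - u} : Finset E).card := by
          apply card_le_card
          intro w hw
          simp only [mem_filter, mem_univ, true_and] at hw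
          have key : (w - u) * (w + u - t) = 0 := by linear_combination hw - hu
          rcases mul_eq_zero.mp key with h1 | h1
          · simp [sub_eq_zero.mp h1]
          · have : w = t - u := by linear_combination h1
            simp [this]
      _ ≤ 2 := card_insert_le _ _ |>.trans (by simp)
  · push_neg at h
    rw [filter_eq_empty_iff.mpr (fun w _ => h w)]
    simp

variable (q : ℕ)

/-- the key count: fibers of (trace, norm) on `E^*` and of (sum, prod) on `F^* × F^*`
jointly have cardinality 2 above every point of `F × F^*`. -/
lemma key_count (hq : 2 ≤ q) (hF : Fintype.card F = q) (hE : Fintype.card E = q ^ 2)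
    (htr : ∀ w : E, algebraMap F E (Algebra.trace F E w) = w + w ^ q)
    (hnm : ∀ w : E, algebraMap F E (Algebra.norm F w) = w * w ^ q) :
    ∀ z : F × F, z.2 ≠ 0 →
      (((univ.filter fun w : E => w ≠ 0).filter
          fun w => (Algebra.trace F E w, Algebra.norm F w) = z).card +
        ((univ.filter fun y : F × F => y.1 ≠ 0 ∧ y.2 ≠ 0).filter
          (fun y => (y.1 + y.2, y.1 * y.2) = z)).card) = 2 := by
  have hi : Function.Injective (algebraMap F E) := (algebraMap F E).injective
  have hpc : ∀ x : F, (algebraMap F E x) ^ q = algebraMap F E x := by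
    intro x
    rw [← map_pow]
    congr 1
    have := FiniteField.pow_card x
    rwa [hF] at this
  have htr' : ∀ x : F, Algebra.trace F E (algebraMap F E x) = 2 * x := by
    intro x
    apply hi
    rw [htr (algebraMap F E x), hpc, map_mul, map_ofNat]
    ring
  have hnm' : ∀ x : F, Algebra.norm F (algebraMap F E x) = x ^ 2 := by
    intro x
    apply hi
    rw [hnm (algebraMap F E x), hpc, map_pow]
    ring
  set sE : Finset E := univ.filter fun w : E => w ≠ 0 with hsE
  set sP : Finset (F × F) := univ.filter fun y : F × F => y.1 ≠ 0 ∧ y.2 ≠ 0 with hsP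
  set U : Finset (F × F) := univ ×ˢ (univ.filter fun m : F => m ≠ 0) with hU
  set fA : E → F × F := fun w => (Algebra.trace F E w, Algebra.norm F w) with hfA
  set fB : F × F → F × F := fun y => (y.1 + y.2, y.1 * y.2) with hfB
  -- pointwise upper bound
  have hle : ∀ z ∈ U, (sE.filter fun w => fA w = z).card +
      (sP.filter fun y => fB y = z).card ≤ 2 := by
    rintro ⟨t, n⟩ hzU
    have hn : n ≠ 0 := by
      simp only [hU, mem_product, mem_filter, mem_univ, true_and] at hzU
      exact hzU
    set A : Finset E := sE.filter fun w => fA w = (t, n) with hA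
    set B : Finset (F × F) := sP.filter fun y => fB y = (t, n) with hB
    set R : Finset E :=
      univ.filter (fun w : E => w ^ 2 - algebraMap F E t * w + algebraMap F E n = 0) with hR
    have memA : ∀ w : E, w ∈ A ↔ w ≠ 0 ∧ Algebra.trace F E w = t ∧ Algebra.norm F w = n := by
      intro w
      simp [hA, hsE, hfA, Prod.ext_iff, and_assoc]
    have memB : ∀ y : F × F,
        y ∈ B ↔ (y.1 ≠ 0 ∧ y.2 ≠ 0) ∧ y.1 + y.2 = t ∧ y.1 * y.2 = n := by
      intro y
      simp [hB, hsP, hfB, Prod.ext_iff]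
    have hAR : ∀ w ∈ A, w ∈ R := by
      intro w hw
      obtain ⟨hw0, h1, h2⟩ := (memA w).mp hw
      simp only [hR, mem_filter, mem_univ, true_and]
      rw [← h1, ← h2, htr w, hnm w]
      ring
    have hBR : ∀ y ∈ B, algebraMap F E y.1 ∈ R := by
      intro y hy
      obtain ⟨⟨h1, h2⟩, h3, h4⟩ := (memB y).mp hy
      simp only [hR, mem_filter, mem_univ, true_and]
      rw [← h3, ← h4, map_add, map_mul]
      ring
    have hRcard : R.card ≤ 2 := roots_card_le_two _ _
    by_cases hov : ∃ y ∈ B, algebraMap F E y.1 ∈ A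
    · obtain ⟨y, hyB, hyA⟩ := hov
      obtain ⟨hx0, hxt, hxn⟩ := (memA _).mp hyA
      obtain ⟨⟨hy1, hy2⟩, hyt, hyn⟩ := (memB y).mp hyB
      have ht2 : t = 2 * y.1 := by rw [← hxt, htr']
      have hRsub : ∀ u ∈ R, u = algebraMap F E y.1 := by
        intro u hu
        have hxR : algebraMap F E y.1 ∈ R := hBR y hyB
        simp only [hR, mem_filter, mem_univ, true_and] at hu hxR
        have key : (u - algebraMap F E y.1) * (u + algebraMap F E y.1 - algebraMap F E t) = 0 := by
          linear_combination hu - hxR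
        rcases mul_eq_zero.mp key with h1 | h1
        · exact sub_eq_zero.mp h1
        · have : u = algebraMap F E t - algebraMap F E y.1 := by linear_combination h1
          rw [this, ht2, map_mul, map_ofNat]
          ring
      have hAcard : A.card ≤ 1 := by
        apply card_le_one.mpr
        intro u hu v hv
        rw [hRsub u (hAR u hu), hRsub v (hAR v hv)]
      have hBcard : B.card ≤ 1 := by
        apply card_le_one.mpr
        intro u hu v hv
        obtain ⟨⟨hu1, hu2⟩, hut, hun⟩ := (memB u).mp hu
        obtain ⟨⟨hv1, hv2⟩, hvt, hvn⟩ := (memB v).mp hv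
        have e1 : u.1 = v.1 := hi (by rw [hRsub _ (hBR u hu), hRsub _ (hBR v hv)])
        have e2 : u.2 = v.2 := by
          have : u.1 + u.2 = v.1 + v.2 := by rw [hut, hvt]
          rw [e1] at this
          exact add_left_cancel this
        exact Prod.ext e1 e2
      omega
    · push_neg at hov
      have hinj : Set.InjOn (fun y : F × F => algebraMap F E y.1) B := by
        intro u hu v hv he
        obtain ⟨⟨hu1, hu2⟩, hut, hun⟩ := (memB u).mp hu
        obtain ⟨⟨hv1, hv2⟩, hvt, hvn⟩ := (memB v).mp hv
        have e1 : u.1 = v.1 := hi he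
        have e2 : u.2 = v.2 := by
          have : u.1 + u.2 = v.1 + v.2 := by rw [hut, hvt]
          rw [e1] at this
          exact add_left_cancel this
        exact Prod.ext e1 e2
      have hdisj : Disjoint A (B.image fun y : F × F => algebraMap F E y.1) := by
        rw [Finset.disjoint_right]
        intro w hwB hwA
        obtain ⟨y, hyB, rfl⟩ := Finset.mem_image.mp hwB
        exact hov y hyB hwA
      calc A.card + B.card
          = A.card + (B.image fun y : F × F => algebraMap F E y.1).card := by
            rw [Finset.card_image_of_injOn hinj]
        _ = (A ∪ B.image fun y : F × F => algebraMap F E y.1).card :=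
            (Finset.card_union_of_disjoint hdisj).symm
        _ ≤ R.card := by
            apply card_le_card
            apply Finset.union_subset
            · intro w hw; exact hAR w hw
            · intro w hw
              obtain ⟨y, hyB, rfl⟩ := Finset.mem_image.mp hw
              exact hBR y hyB
        _ ≤ 2 := hRcard
  -- total counts
  have mapsA : ∀ w ∈ sE, fA w ∈ U := by
    intro w hw
    have hw0 : w ≠ 0 := by simpa [hsE] using hw
    have hnm0 : Algebra.norm F w ≠ 0 := by
      intro h0
      have := hnm w
      rw [h0, map_zero] at this
      exact (mul_ne_zero hw0 (pow_ne_zero q hw0)) this.symm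
    simp [hU, hfA, hnm0]
  have mapsB : ∀ y ∈ sP, fB y ∈ U := by
    intro y hy
    have hy' : y.1 ≠ 0 ∧ y.2 ≠ 0 := by simpa [hsP] using hy
    simp [hU, hfB, mul_ne_zero hy'.1 hy'.2]
  have e1 : ∑ z ∈ U, (sE.filter fun w => fA w = z).card = sE.card :=
    (Finset.card_eq_sum_card_fiberwise mapsA).symm
  have e2 : ∑ z ∈ U, (sP.filter fun y => fB y = z).card = sP.card :=
    (Finset.card_eq_sum_card_fiberwise mapsB).symm
  have csF : (univ.filter fun m : F => m ≠ 0).card = q - 1 := by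
    rw [filter_ne', card_erase_of_mem (mem_univ _), card_univ, hF]
  have csE : sE.card = q ^ 2 - 1 := by
    rw [hsE, filter_ne', card_erase_of_mem (mem_univ _), card_univ, hE]
  have csP : sP.card = (q - 1) * (q - 1) := by
    have : sP = (univ.filter fun m : F => m ≠ 0) ×ˢ (univ.filter fun m : F => m ≠ 0) := by
      ext ⟨a, b⟩
      simp [hsP, mem_product, and_comm]
    rw [this, card_product, csF]
  have cU : U.card = q * (q - 1) := by
    rw [hU, card_product, card_univ, hF, csF]
  have harith : q ^ 2 - 1 + (q - 1) * (q - 1) = 2 * (q * (q - 1)) := by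
    have h1 : 1 ≤ q := by omega
    have h2 : 1 ≤ q ^ 2 := Nat.one_le_pow _ _ (by omega)
    zify [h1, h2]
    ring
  have hsum : ∑ z ∈ U, ((sE.filter fun w => fA w = z).card +
      (sP.filter fun y => fB y = z).card) = ∑ z ∈ U, 2 := by
    rw [Finset.sum_add_distrib, e1, e2, Finset.sum_const, csE, csP, cU, smul_eq_mul]
    omega
  intro z hz
  have hzU : z ∈ U := by
    simp [hU, hz]
  exact (Finset.sum_eq_sum_iff_of_le hle).mp hsum z hzU

end Count

lemma card_pow_eq_one_le {E : Type} [Field E] [Fintype E] [DecidableEq E] (m : ℕ) (hm : m ≠ 0) :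
    (univ.filter fun u : E => u ^ m = 1).card ≤ m := by
  have hsub : (univ.filter fun u : E => u ^ m = 1) ⊆ (Polynomial.nthRoots m (1 : E)).toFinset := by
    intro u hu
    rw [Multiset.mem_toFinset, Polynomial.mem_nthRoots (Nat.pos_of_ne_zero hm)]
    exact (mem_filter.mp hu).2
  calc (univ.filter fun u : E => u ^ m = 1).card
      ≤ (Polynomial.nthRoots m (1 : E)).toFinset.card := card_le_card hsub
    _ ≤ Multiset.card (Polynomial.nthRoots m (1 : E)) := (Polynomial.nthRoots m (1 : E)).toFinset_card_le
    _ ≤ m := Polynomial.card_nthRoots m 1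

noncomputable instance mulCharFintype (F : Type) [Field F] [Fintype F] :
    Fintype (MulChar F ℂ) := .ofFinite _

lemma sum_mulChar_apply {F : Type} [Field F] [Fintype F] [DecidableEq F] (b : F) (hb : b ≠ 0) :
    ∑ ψ : MulChar F ℂ, ψ b = if b = 1 then ((Fintype.card F - 1 : ℕ) : ℂ) else 0 := by
  split_ifs with h
  · subst h
    simp only [map_one]
    rw [Finset.sum_const, card_univ]
    have hc : Fintype.card (MulChar F ℂ) = Fintype.card F - 1 := by
      have h1 := MulChar.card_eq_card_units_of_hasEnoughRootsOfUnity F ℂ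
      rw [Nat.card_eq_fintype_card, Nat.card_eq_fintype_card] at h1
      rw [h1, Fintype.card_units]
    rw [hc]
    simp
  · obtain ⟨χ, hχ⟩ := MulChar.exists_apply_ne_one_of_hasEnoughRootsOfUnity F ℂ h
    refine eq_zero_of_mul_eq_self_left hχ ?_
    rw [Finset.mul_sum]
    simp only [← MulChar.mul_apply]
    exact Fintype.sum_bijective _ (Group.mulLeft_bijective χ) _ _ fun χ' ↦ rfl

section DH

variable (p q : ℕ) [Fact p.Prime] [NeZero p] (F E : Type) [Field F] [Fintype F]
  [DecidableEq F] [Field E] [Fintype E] [DecidableEq E] [Algebra (ZMod p) F]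
  [Algebra (ZMod p) E] [Algebra F E] [IsScalarTower (ZMod p) F E]

/-- quadratic Davenport--Hasse relation. -/
lemma dh (hq : 2 ≤ q) (hF : Fintype.card F = q) (hE : Fintype.card E = q ^ 2)
    (htr : ∀ w : E, algebraMap F E (Algebra.trace F E w) = w + w ^ q)
    (hnm : ∀ w : E, algebraMap F E (Algebra.norm F w) = w * w ^ q)
    (χ : MulChar F ℂ) :
    ∑ w ∈ univ.filter (fun w : E => w ≠ 0), χ (Algebra.norm F w) * stdChar p E w =
      -(∑ x ∈ univ.filter (fun x : F => x ≠ 0), χ x * stdChar p F x) ^ 2 := by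
  have hEF : ∀ w : E, stdChar p E w = stdChar p F (Algebra.trace F E w) := by
    intro w
    simp only [stdChar, AddChar.compAddMonoidHom_apply, LinearMap.toAddMonoidHom_coe]
    rw [Algebra.trace_trace]
  set sE : Finset E := univ.filter fun w : E => w ≠ 0 with hsE
  set sF : Finset F := univ.filter fun x : F => x ≠ 0 with hsF
  set U : Finset (F × F) := univ ×ˢ (univ.filter fun m : F => m ≠ 0) with hU
  set fA : E → F × F := fun w => (Algebra.trace F E w, Algebra.norm F w) with hfA
  set fB : F × F → F × F := fun y => (y.1 + y.2, y.1 * y.2) with hfB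
  set g : F × F → ℂ := fun z => χ z.2 * stdChar p F z.1 with hg
  have mapsA : ∀ w ∈ sE, fA w ∈ U := by
    intro w hw
    have hw0 : w ≠ 0 := by simpa [hsE] using hw
    have hnm0 : Algebra.norm F w ≠ 0 := by
      intro h0
      have h1 := hnm w
      rw [h0, map_zero] at h1
      exact (mul_ne_zero hw0 (pow_ne_zero q hw0)) h1.symm
    simp [hU, hfA, hnm0]
  have mapsB : ∀ y ∈ (univ.filter fun y : F × F => y.1 ≠ 0 ∧ y.2 ≠ 0), fB y ∈ U := by
    intro y hy
    have hy' : y.1 ≠ 0 ∧ y.2 ≠ 0 := by simpa using hy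
    simp [hU, hfB, mul_ne_zero hy'.1 hy'.2]
  have hS1 : ∑ w ∈ sE, χ (Algebra.norm F w) * stdChar p E w =
      ∑ z ∈ U, ((sE.filter fun w => fA w = z).card : ℂ) * g z := by
    rw [← Finset.sum_fiberwise_of_maps_to mapsA (fun w => χ (Algebra.norm F w) * stdChar p E w)]
    refine Finset.sum_congr rfl fun z hz => ?_
    rw [Finset.sum_congr rfl (fun w hw => ?_), Finset.sum_const, nsmul_eq_mul]
    have hww : fA w = z := (mem_filter.mp hw).2
    rw [hEF w, hg, ← hww, hfA]
  have hS2 : (∑ x ∈ sF, χ x * stdChar p F x) ^ 2 =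
      ∑ z ∈ U, (((univ.filter fun y : F × F => y.1 ≠ 0 ∧ y.2 ≠ 0).filter
        fun y => fB y = z).card : ℂ) * g z := by
    rw [sq, Finset.sum_mul_sum, ← Finset.sum_product']
    have hprod : sF ×ˢ sF = (univ.filter fun y : F × F => y.1 ≠ 0 ∧ y.2 ≠ 0) := by
      ext ⟨u, v⟩
      simp [hsF, mem_product]
    rw [hprod, ← Finset.sum_fiberwise_of_maps_to mapsB
      (fun y => (χ y.1 * stdChar p F y.1) * (χ y.2 * stdChar p F y.2))]
    refine Finset.sum_congr rfl fun z hz => ?_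
    rw [Finset.sum_congr rfl (fun y hy => ?_), Finset.sum_const, nsmul_eq_mul]
    have hyy : fB y = z := (mem_filter.mp hy).2
    rw [hg, ← hyy, hfB]
    show χ y.1 * stdChar p F y.1 * (χ y.2 * stdChar p F y.2) =
      χ (y.1 * y.2) * stdChar p F (y.1 + y.2)
    rw [map_mul χ, AddChar.map_add_eq_mul]
    ring
  have hzero : ∑ z ∈ U, (2 : ℂ) * g z = 0 := by
    rw [← Finset.mul_sum, hU, Finset.sum_product]
    have : ∀ x : F, ∑ y ∈ univ.filter (fun m : F => m ≠ 0), g (x, y) =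
        (∑ y ∈ univ.filter (fun m : F => m ≠ 0), χ y) * stdChar p F x := by
      intro x
      rw [Finset.sum_mul]
    simp only [this]
    rw [← Finset.mul_sum, sum_stdChar_eq_zero, mul_zero, mul_zero]
  have hcomb : (∑ w ∈ sE, χ (Algebra.norm F w) * stdChar p E w) +
      (∑ x ∈ sF, χ x * stdChar p F x) ^ 2 = 0 := by
    rw [hS1, hS2, ← Finset.sum_add_distrib, ← hzero]
    refine Finset.sum_congr rfl fun z hz => ?_
    rw [← add_mul]
    congr 1
    have hz2 : z.2 ≠ 0 := by
      simp only [hU, mem_product, mem_filter, mem_univ, true_and] at hz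
      exact hz
    have h2 := key_count q hq hF hE htr hnm z hz2
    simp only [hsE, hfA, hfB]
    exact_mod_cast h2
  linear_combination hcomb

end DH

theorem sum_coset_char_eq_gauss (p q : ℕ) [Fact p.Prime] (F E : Type) [Field F] [Fintype F]
    [DecidableEq F] [Field E] [Fintype E] [DecidableEq E] [Algebra (ZMod p) F]
    [Algebra (ZMod p) E] [Algebra F E] (hF : Fintype.card F = q)
    (hE : Fintype.card E = q ^ 2)
    (γ : E) (hγ : ∀ x : E, x ≠ 0 → ∃ n : ℕ, γ ^ n = x)
    (c : E) (hc : c ≠ 0) (j : ℤ) :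
    ∑ w ∈ Finset.univ.filter (fun w : E => w ≠ 0),
        canAddChar p E (c * γ ^ j * w ^ (q - 1)) =
      -∑ᶠ ψ : MulChar F ℂ,
        (∑ x ∈ Finset.univ.filter (fun x : F => x ≠ 0), ψ⁻¹ x * canAddChar p F x) ^ 2 *
          ψ (Algebra.norm F (c * γ ^ j)) := by
  haveI : NeZero p := ⟨(Fact.out : p.Prime).ne_zero⟩
  haveI : IsScalarTower (ZMod p) F E :=
    IsScalarTower.of_algebraMap_eq fun x => by
      rw [RingHom.ext_zmod (algebraMap (ZMod p) E)
        ((algebraMap F E).comp (algebraMap (ZMod p) F))]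
      rfl
  classical
  have hq : 2 ≤ q := by
    have h1 := Fintype.one_lt_card (α := F)
    omega
  haveI : CharP F p := (Algebra.charP_iff (ZMod p) F p).mp (ZMod.charP p)
  haveI : CharP E p := (Algebra.charP_iff (ZMod p) E p).mp (ZMod.charP p)
  have hi : Function.Injective (algebraMap F E) := (algebraMap F E).injective
  obtain ⟨f, hpp, hqpf⟩ := FiniteField.card F p
  rw [hF] at hqpf
  haveI : ExpChar E p := ExpChar.prime Fact.out
  have hpcF : ∀ x : F, x ^ q = x := by
    intro x
    have h1 := FiniteField.pow_card x
    rwa [hF] at h1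
  have hpc : ∀ x : F, (algebraMap F E x) ^ q = algebraMap F E x := by
    intro x
    rw [← map_pow, hpcF]
  let φ : E →ₐ[F] E :=
    { toRingHom := iterateFrobenius E p f,
      commutes' := fun x => by
        show iterateFrobenius E p f (algebraMap F E x) = algebraMap F E x
        rw [iterateFrobenius_def, ← hqpf, hpc] }
  have hφinj : Function.Injective φ := φ.toRingHom.injective
  let φe : E ≃ₐ[F] E := AlgEquiv.ofBijective φ ((Finite.injective_iff_bijective).mp hφinj)
  have hφe : ∀ x : E, φe x = x ^ q := by
    intro x
    show iterateFrobenius E p f x = x ^ q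
    rw [iterateFrobenius_def, ← hqpf]
  have hφe1 : φe ≠ 1 := by
    intro h
    have hall : ∀ x : E, x ^ q = x := by
      intro x
      rw [← hφe x, h, AlgEquiv.one_apply]
    have hsub : (univ.filter fun w : E => w ≠ 0) ⊆ (univ.filter fun u : E => u ^ (q-1) = 1) := by
      intro w hw
      have hw0 : w ≠ 0 := by simpa using hw
      have hq' : w ^ (q - 1) * w = 1 * w := by
        rw [← pow_succ, one_mul]
        have h2 : q - 1 + 1 = q := by omega
        rw [h2]
        exact hall w
      simp only [mem_filter, mem_univ, true_and]
      exact mul_right_cancel₀ hw0 hq'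
    have h1 : q ^ 2 - 1 ≤ q - 1 := by
      calc q ^ 2 - 1 = (univ.filter fun w : E => w ≠ 0).card := by
            rw [filter_ne', card_erase_of_mem (mem_univ _), card_univ, hE]
        _ ≤ (univ.filter fun u : E => u ^ (q-1) = 1).card := card_le_card hsub
        _ ≤ q - 1 := card_pow_eq_one_le _ (by omega)
    have h2 : q ^ 2 = q * q := sq q
    have h3 : 2 * q ≤ q * q := Nat.mul_le_mul_right q hq
    omega
  have hGal : (univ : Finset (E ≃ₐ[F] E)) = {1, φe} := by
    have hrank : Module.finrank F E = 2 := by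
      have hcard := Module.card_eq_pow_finrank (K := F) (V := E)
      rw [hF, hE] at hcard
      exact Nat.pow_right_injective hq hcard.symm
    have hcard2 : Fintype.card (E ≃ₐ[F] E) = 2 := by
      rw [← Nat.card_eq_fintype_card, IsGalois.card_aut_eq_finrank, hrank]
    refine (Finset.eq_of_subset_of_card_le (subset_univ _) ?_).symm
    rw [card_univ, hcard2, card_pair (Ne.symm hφe1)]
  have h1φ : (1 : E ≃ₐ[F] E) ≠ φe := Ne.symm hφe1
  have htr : ∀ w : E, algebraMap F E (Algebra.trace F E w) = w + w ^ q := by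
    intro w
    rw [trace_eq_sum_automorphisms, hGal, Finset.sum_pair h1φ, AlgEquiv.one_apply, hφe]
  have hnm : ∀ w : E, algebraMap F E (Algebra.norm F w) = w * w ^ q := by
    intro w
    rw [Algebra.norm_eq_prod_automorphisms, hGal, Finset.prod_pair h1φ, AlgEquiv.one_apply, hφe]
  simp only [← stdChar_apply]
  set a := c * γ ^ j with haDef
  have hγ0 : γ ≠ 0 := by
    intro h0
    subst h0
    have h2 : ∀ x : E, x ≠ 0 → x = 1 := by
      intro x hx
      obtain ⟨n, hn⟩ := hγ x hx
      cases n with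
      | zero => rw [← hn, pow_zero]
      | succ m => rw [zero_pow (Nat.succ_ne_zero m)] at hn; exact absurd hn.symm hx
    have hsub : (univ : Finset E) ⊆ {0, 1} := by
      intro x _
      by_cases hx : x = 0
      · simp [hx]
      · simp [h2 x hx]
    have hcard : Fintype.card E ≤ 2 := by
      calc Fintype.card E = (univ : Finset E).card := (card_univ).symm
        _ ≤ ({0, 1} : Finset E).card := card_le_card hsub
        _ ≤ 2 := (card_insert_le _ _).trans (by simp)
    rw [hE] at hcard
    have h3 : q ^ 2 = q * q := sq q
    have h4 : 2 * 2 ≤ q * q := Nat.mul_le_mul hq hq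
    omega
  have ha : a ≠ 0 := mul_ne_zero hc (zpow_ne_zero j hγ0)
  have hnorm0 : ∀ w : E, w ≠ 0 → Algebra.norm F w ≠ 0 := by
    intro w hw0 h0
    have h1 := hnm w
    rw [h0, map_zero] at h1
    exact (mul_ne_zero hw0 (pow_ne_zero q hw0)) h1.symm
  have hNa : Algebra.norm F a ≠ 0 := hnorm0 a ha
  set sE : Finset E := univ.filter fun w : E => w ≠ 0 with hsE
  set sF : Finset F := univ.filter fun x : F => x ≠ 0 with hsF
  set K : Finset E := sE.filter (fun v => Algebra.norm F v = Algebra.norm F a) with hK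
  have hfermat : ∀ x : F, x ≠ 0 → x ^ (q - 1) = 1 := by
    intro x hx
    have h1 := FiniteField.pow_card_sub_one_eq_one x hx
    rwa [hF] at h1
  have hpow1 : ∀ x : F, x ≠ 0 → (algebraMap F E x) ^ (q - 1) = 1 := by
    intro x hx
    rw [← map_pow, hfermat x hx, map_one]
  have hTimg : ∀ u : E, u ^ (q - 1) = 1 → ∃ x : F, x ≠ 0 ∧ algebraMap F E x = u := by
    intro u hu
    have hS : sF.image (algebraMap F E) ⊆ univ.filter (fun u : E => u ^ (q-1) = 1) := by
      intro v hv
      obtain ⟨x, hx, rfl⟩ := Finset.mem_image.mp hv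
      have hx0 : x ≠ 0 := by simpa [hsF] using hx
      simp [hpow1 x hx0]
    have hcardS : (sF.image (algebraMap F E)).card = q - 1 := by
      rw [Finset.card_image_of_injective _ hi, hsF, filter_ne',
        card_erase_of_mem (mem_univ _), card_univ, hF]
    have heq : sF.image (algebraMap F E) = univ.filter (fun u : E => u ^ (q-1) = 1) :=
      Finset.eq_of_subset_of_card_le hS (by rw [hcardS]; exact card_pow_eq_one_le _ (by omega))
    have hu' : u ∈ sF.image (algebraMap F E) := by rw [heq]; simp [hu]
    obtain ⟨x, hx, hxu⟩ := Finset.mem_image.mp hu'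
    exact ⟨x, by simpa [hsF] using hx, hxu⟩
  have hfiber : ∀ v : E, ∀ w₀ ∈ sE, a * w₀ ^ (q-1) = v →
      (sE.filter fun w => a * w ^ (q-1) = v).card = q - 1 := by
    intro v w₀ hw₀ hv
    have hw₀0 : w₀ ≠ 0 := by simpa [hsE] using hw₀
    have hcardsF : sF.card = q - 1 := by
      rw [hsF, filter_ne', card_erase_of_mem (mem_univ _), card_univ, hF]
    refine Eq.trans ((Finset.card_bij (fun x _ => algebraMap F E x * w₀) ?_ ?_ ?_).symm) hcardsF
    · intro x hx
      have hx0 : x ≠ 0 := by simpa [hsF] using hx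
      have hne : algebraMap F E x * w₀ ≠ 0 :=
        mul_ne_zero (fun h => hx0 (hi (by rw [h, map_zero]))) hw₀0
      rw [mem_filter, hsE, mem_filter]
      exact ⟨⟨mem_univ _, hne⟩, by rw [mul_pow, hpow1 x hx0, one_mul, hv]⟩
    · intro x hx y hy hxy
      exact hi (mul_right_cancel₀ hw₀0 hxy)
    · intro w hw
      rw [mem_filter, hsE, mem_filter] at hw
      obtain ⟨⟨-, hw0⟩, hwv⟩ := hw
      have hcan : w ^ (q-1) = w₀ ^ (q-1) := by
        apply mul_left_cancel₀ ha
        rw [hwv, ← hv]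
      have hroot : (w * w₀⁻¹) ^ (q-1) = 1 := by
        rw [mul_pow, inv_pow, hcan, mul_inv_cancel₀ (pow_ne_zero _ hw₀0)]
      obtain ⟨x, hx0, hx⟩ := hTimg _ hroot
      refine ⟨x, by rw [hsF, mem_filter]; exact ⟨mem_univ _, hx0⟩, ?_⟩
      show algebraMap F E x * w₀ = w
      rw [hx]
      field_simp
  have mapsφ : ∀ w ∈ sE, a * w ^ (q-1) ∈ K := by
    intro w hw
    have hw0 : w ≠ 0 := by simpa [hsE] using hw
    have h1 : Algebra.norm F (a * w ^ (q-1)) = Algebra.norm F a := by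
      rw [map_mul, map_pow, hfermat _ (hnorm0 w hw0), mul_one]
    simp only [hK, hsE, mem_filter, mem_univ, true_and]
    exact ⟨mul_ne_zero ha (pow_ne_zero _ hw0), h1⟩
  have himK : sE.image (fun w => a * w ^ (q-1)) = K := by
    apply Finset.eq_of_subset_of_card_le
    · intro v hv
      obtain ⟨w, hw, rfl⟩ := Finset.mem_image.mp hv
      exact mapsφ w hw
    · have hKle : K.card ≤ q + 1 := by
        have hto : ∀ v ∈ K, v * a⁻¹ ∈ univ.filter (fun u : E => u ^ (q+1) = 1) := by
          intro v hv
          simp only [hK, hsE, mem_filter, mem_univ, true_and] at hv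
          obtain ⟨hv0, hvn⟩ := hv
          have hN1 : Algebra.norm F (v * a⁻¹) = 1 := by
            have h2 : Algebra.norm F (v * a⁻¹) * Algebra.norm F a = Algebra.norm F a := by
              rw [← map_mul, inv_mul_cancel_right₀ ha, hvn]
            exact mul_right_cancel₀ hNa (by rw [h2, one_mul])
          have h3 := hnm (v * a⁻¹)
          rw [hN1, map_one] at h3
          simp only [mem_filter, mem_univ, true_and]
          rw [pow_succ, mul_comm]
          exact h3.symm
        calc K.card ≤ (univ.filter (fun u : E => u ^ (q+1) = 1)).card :=
              Finset.card_le_card_of_injOn (fun v => v * a⁻¹) hto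
                (fun u _ v _ h => mul_right_cancel₀ (inv_ne_zero ha) h)
          _ ≤ q + 1 := card_pow_eq_one_le _ (by omega)
      have himcard : (sE.image (fun w => a * w ^ (q-1))).card * (q - 1) = q ^ 2 - 1 := by
        have h1 : sE.card = ∑ v ∈ sE.image (fun w => a * w ^ (q-1)),
            (sE.filter fun w => a * w ^ (q-1) = v).card :=
          Finset.card_eq_sum_card_fiberwise (fun w hw => Finset.mem_image_of_mem _ hw)
        have h2 : ∀ v ∈ sE.image (fun w => a * w ^ (q-1)),
            (sE.filter fun w => a * w ^ (q-1) = v).card = q - 1 := by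
          intro v hv
          obtain ⟨w₀, hw₀, hv0⟩ := Finset.mem_image.mp hv
          exact hfiber v w₀ hw₀ hv0
        rw [Finset.sum_congr rfl h2, Finset.sum_const, smul_eq_mul] at h1
        rw [← h1, hsE, filter_ne', card_erase_of_mem (mem_univ _), card_univ, hE]
      have himcard' : (sE.image (fun w => a * w ^ (q-1))).card = q + 1 := by
        have h2 : 1 ≤ q ^ 2 := Nat.one_le_pow _ _ (by omega)
        have hfact : (q + 1) * (q - 1) = q ^ 2 - 1 := by
          zify [show 1 ≤ q by omega, h2]
          ring
        apply Nat.eq_of_mul_eq_mul_right (show 0 < q - 1 by omega)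
        rw [himcard, hfact]
      rw [himcard']
      exact hKle
  have hLHS : ∑ w ∈ sE, stdChar p E (a * w ^ (q-1)) =
      ∑ v ∈ K, ((q-1 : ℕ) : ℂ) * stdChar p E v := by
    rw [← Finset.sum_fiberwise_of_maps_to mapsφ (fun w => stdChar p E (a * w ^ (q-1)))]
    refine Finset.sum_congr rfl fun v hv => ?_
    have hvim : v ∈ sE.image (fun w => a * w ^ (q-1)) := by rw [himK]; exact hv
    obtain ⟨w₀, hw₀, hv0⟩ := Finset.mem_image.mp hvim
    rw [Finset.sum_congr rfl (fun w hw => ?_), Finset.sum_const,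
      hfiber v w₀ hw₀ hv0, nsmul_eq_mul]
    rw [(mem_filter.mp hw).2]
  have hDH : ∀ ψ : MulChar F ℂ,
      (∑ x ∈ sF, ψ⁻¹ x * stdChar p F x) ^ 2 =
        -∑ w ∈ sE, ψ⁻¹ (Algebra.norm F w) * stdChar p E w := by
    intro ψ
    have h1 := dh p q F E hq hF hE htr hnm ψ⁻¹
    rw [hsE, hsF, h1, neg_neg]
  have horth : ∀ w ∈ sE, (∑ ψ : MulChar F ℂ, ψ⁻¹ (Algebra.norm F w) * ψ (Algebra.norm F a)) =
      if Algebra.norm F w = Algebra.norm F a then ((q - 1 : ℕ) : ℂ) else 0 := by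
    intro w hw
    have hw0 : w ≠ 0 := by simpa [hsE] using hw
    have hu : Algebra.norm F w ≠ 0 := hnorm0 w hw0
    have hb : (Algebra.norm F w)⁻¹ * Algebra.norm F a ≠ 0 :=
      mul_ne_zero (inv_ne_zero hu) hNa
    rw [Finset.sum_congr rfl
      (fun ψ _ => by rw [MulChar.inv_apply', ← map_mul] : ∀ ψ ∈ univ, _ = _),
      sum_mulChar_apply _ hb, hF]
    exact if_congr (inv_mul_eq_one₀ hu) rfl rfl
  rw [finsum_eq_sum_of_fintype]
  calc ∑ w ∈ sE, stdChar p E (a * w ^ (q-1))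
      = ∑ v ∈ K, ((q-1 : ℕ) : ℂ) * stdChar p E v := hLHS
    _ = ∑ w ∈ sE, stdChar p E w *
        (if Algebra.norm F w = Algebra.norm F a then ((q - 1 : ℕ) : ℂ) else 0) := by
        rw [hK, Finset.sum_filter]
        refine Finset.sum_congr rfl fun w hw => ?_
        split_ifs with h
        · ring
        · rw [mul_zero]
    _ = ∑ w ∈ sE, stdChar p E w *
        (∑ ψ : MulChar F ℂ, ψ⁻¹ (Algebra.norm F w) * ψ (Algebra.norm F a)) := by
        refine Finset.sum_congr rfl fun w hw => ?_
        rw [horth w hw]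
    _ = ∑ ψ : MulChar F ℂ, ∑ w ∈ sE,
        stdChar p E w * (ψ⁻¹ (Algebra.norm F w) * ψ (Algebra.norm F a)) := by
        simp_rw [Finset.mul_sum]
        rw [Finset.sum_comm]
    _ = -∑ ψ : MulChar F ℂ,
        (∑ x ∈ sF, ψ⁻¹ x * stdChar p F x) ^ 2 * ψ (Algebra.norm F a) := by
        rw [← Finset.sum_neg_distrib]
        refine Finset.sum_congr rfl fun ψ _ => ?_
        rw [hDH ψ, neg_mul, neg_neg, Finset.sum_mul]
        refine Finset.sum_congr rfl fun w hw => ?_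
        ring
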